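/- Let R, L, D be non-negative real numbers with R + L + D > 0, and λ a complex number with Re(λ) > 0. Then z := R + L·λ + D/λ satisfies |z| ≥ (R + L + D) · Re(λ) / (1 + |λ|²). -/

import Mathlib

theorem abs_z_lower_bound (R L D : ℝ) (hR : 0 ≤ R) (hL : 0 ≤ L) (hD : 0 ≤ D)
    (hpos : 0 < R + L + D) (lam : ℂ) (hre : 0 < lam.re) :
    ‖(R : ℂ) + (L : ℂ) * lam + (D : ℂ) / lam‖ ≥
      (R + L + D) * lam.re / (1 + ‖lam‖ ^ 2) := by
  have hlam : lam ≠ 0 := fun h => by rw [h] at hre; simp at hre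
  have hns : 0 < Complex.normSq lam := Complex.normSq_pos.mpr hlam
  have habs : ‖lam‖ ^ 2 = Complex.normSq lam := Complex.sq_norm lam
  set m := Complex.normSq lam with hm
  set a := lam.re with ha
  -- real part of z
  have hrez : ((R : ℂ) + (L : ℂ) * lam + (D : ℂ) / lam).re = R + L * a + D * (a / m) := by
    simp [Complex.add_re, Complex.div_re, Complex.mul_re, Complex.ofReal_re,
      Complex.ofReal_im, hm, ha]
    ring
  have h1 : ((R : ℂ) + (L : ℂ) * lam + (D : ℂ) / lam).re ≤
      ‖(R : ℂ) + (L : ℂ) * lam + (D : ℂ) / lam‖ := Complex.re_le_norm _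
  rw [ge_iff_le, habs, hrez] at *
  -- now pure real inequality
  have ha_le : a ≤ 1 + m := by
    have h2 : a ≤ ‖lam‖ := Complex.re_le_norm lam
    nlinarith [Complex.sq_norm lam, norm_nonneg lam]
  have hpos1 : (0:ℝ) < 1 + m := by linarith
  rw [div_le_iff₀ hpos1]
  have e1 : R * a ≤ R * (1 + m) := by nlinarith
  have e2 : L * a ≤ L * a * (1 + m) := by
    nlinarith [mul_nonneg (mul_nonneg hL hre.le) hns.le]
  have e3 : D * a ≤ D * (a / m) * (1 + m) := by
    have hc : a / m * m = a := div_mul_cancel₀ a hns.ne'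
    nlinarith [mul_nonneg hD (div_nonneg hre.le hns.le)]
  nlinarith [h1]
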